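/- Let 𝒱_coh := { v : ℝ → ℝ : there exist a₁, a₂ > 0 with v(x) = a₁x for x ≥ 0 and v(x) = a₂x for x < 0 }, let 𝒲₁ be the set of all convex weighting functions and 𝒲₂ the set of all concave weighting functions. Let ℛ_coh be the set of triples (v, w⁻, w⁺) of a value function and two weighting functions for which ρ_{(v,w⁻,w⁺)} is a coherent risk measure on bounded random variables. Then for every bounded random variable ξ, inf { x ∈ ℝ : E_{w⁻w⁺}[v(ξ − x)] ≤ 0 for all (v,w⁻,w⁺) ∈ 𝒱_coh × 𝒲₁ × 𝒲₂ } = sup_{(v,w⁻,w⁺) ∈ ℛ_coh} ρ_{(v,w⁻,w⁺)}(ξ). -/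

import Mathlib

set_option linter.unusedSectionVars false
set_option linter.unusedVariables false
set_option maxHeartbeats 1000000


open MeasureTheory Set

noncomputable section

/-- A value function: strictly increasing `v : ℝ → ℝ` with `v 0 = 0`. -/
def IsValueFun (v : ℝ → ℝ) : Prop := StrictMono v ∧ v 0 = 0

/-- A weighting function: a strictly increasing `w : [0,1] → [0,1]`
with `w 0 = 0` and `w 1 = 1`. -/
def IsWeightFun (w : ℝ → ℝ) : Prop :=
  StrictMonoOn w (Icc 0 1) ∧ MapsTo w (Icc 0 1) (Icc 0 1) ∧ w 0 = 0 ∧ w 1 = 1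

/-- The CPT distorted expectation
`E_{w⁻w⁺}[v(ζ)] = ∫₀^∞ w⁺(ℙ(v(ζ) ≥ t)) dt − ∫₀^∞ w⁻(ℙ(v(ζ) ≤ −t)) dt`. -/
def cptE {Ω : Type*} [MeasurableSpace Ω] (P : Measure Ω)
    (v wm wp : ℝ → ℝ) (ζ : Ω → ℝ) : ℝ :=
  (∫ t in Ioi (0:ℝ), wp (P {ω | t ≤ v (ζ ω)}).toReal)
    - ∫ t in Ioi (0:ℝ), wm (P {ω | v (ζ ω) ≤ -t}).toReal

/-- Both integrals defining the CPT distorted expectation are finite. -/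
def CptWellDef {Ω : Type*} [MeasurableSpace Ω] (P : Measure Ω)
    (v wm wp : ℝ → ℝ) (ζ : Ω → ℝ) : Prop :=
  IntegrableOn (fun t => wp (P {ω | t ≤ v (ζ ω)}).toReal) (Ioi 0) ∧
    IntegrableOn (fun t => wm (P {ω | v (ζ ω) ≤ -t}).toReal) (Ioi 0)

/-- The generalized shortfall risk measure (GSR-CPT):
`ρ_{(v,w⁻,w⁺)}(ξ) = inf { x : E_{w⁻w⁺}[v(ξ − x)] ≤ 0 }`, with `inf ∅ = +∞`. -/
def gsr {Ω : Type*} [MeasurableSpace Ω] (P : Measure Ω)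
    (v wm wp : ℝ → ℝ) (ξ : Ω → ℝ) : EReal :=
  sInf ((fun x : ℝ => (x : EReal)) ''
    {x : ℝ | cptE P v wm wp (fun ω => ξ ω - x) ≤ 0})

/-- A bounded random variable. -/
def IsBddRV {Ω : Type*} [MeasurableSpace Ω] (ξ : Ω → ℝ) : Prop :=
  Measurable ξ ∧ ∃ M : ℝ, ∀ ω, |ξ ω| ≤ M

/-- A weighting function which is continuously differentiable on `[0,1]`
with strictly positive derivative. -/
def SmoothWeight (w : ℝ → ℝ) : Prop :=
  IsWeightFun w ∧ ContDiffOn ℝ 1 w (Icc 0 1) ∧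
    ∀ p ∈ Icc (0:ℝ) 1, 0 < derivWithin w (Icc 0 1) p

/-- A coherent risk measure on bounded random variables: monotone, translation
invariant, subadditive and positively homogeneous. -/
def IsCoherentRM {Ω : Type*} [MeasurableSpace Ω] (ρ : (Ω → ℝ) → EReal) : Prop :=
  (∀ ξ η : Ω → ℝ, IsBddRV ξ → IsBddRV η → (∀ ω, ξ ω ≤ η ω) → ρ ξ ≤ ρ η) ∧
  (∀ ξ : Ω → ℝ, IsBddRV ξ → ∀ c : ℝ,
    ρ (fun ω => ξ ω + c) = ρ ξ + (c : EReal)) ∧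
  (∀ ξ η : Ω → ℝ, IsBddRV ξ → IsBddRV η →
    ρ (fun ω => ξ ω + η ω) ≤ ρ ξ + ρ η) ∧
  (∀ ξ : Ω → ℝ, IsBddRV ξ → ∀ l : ℝ, 0 ≤ l →
    ρ (fun ω => l * ξ ω) = (l : EReal) * ρ ξ)

/-- The set of positively homogeneous piecewise linear value functions
`v(x) = a₁ x` for `x ≥ 0` and `v(x) = a₂ x` for `x < 0` with `a₁, a₂ > 0`. -/
def cohValueFuns : Set (ℝ → ℝ) :=
  {v | ∃ a₁ a₂ : ℝ, 0 < a₁ ∧ 0 < a₂ ∧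
    (∀ x : ℝ, 0 ≤ x → v x = a₁ * x) ∧ ∀ x : ℝ, x < 0 → v x = a₂ * x}

namespace PRGSRAux

open Filter

variable {Ω : Type*} [MeasurableSpace Ω]

/-- Essential upper bound of a random variable. -/
def eB (P : Measure Ω) (ζ : Ω → ℝ) : ℝ := sInf {m | ∀ᵐ ω ∂P, ζ ω ≤ m}

variable (P : Measure Ω) [IsProbabilityMeasure P]

lemma eB_set_nonempty {ζ : Ω → ℝ} {B : ℝ} (hB : ∀ ω, |ζ ω| ≤ B) :
    Set.Nonempty {m | ∀ᵐ ω ∂P, ζ ω ≤ m} :=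
  ⟨B, mem_setOf_eq ▸ Filter.Eventually.of_forall fun ω => (abs_le.mp (hB ω)).2⟩

lemma eB_set_bddBelow {ζ : Ω → ℝ} {B : ℝ} (hB : ∀ ω, |ζ ω| ≤ B) :
    BddBelow {m | ∀ᵐ ω ∂P, ζ ω ≤ m} := by
  refine ⟨-B, fun m hm => ?_⟩
  have hm' : ∀ᵐ ω ∂P, ζ ω ≤ m := hm
  obtain ⟨ω, hω⟩ := hm'.exists
  exact le_trans (abs_le.mp (hB ω)).1 hω

lemma eB_le {ζ : Ω → ℝ} {B : ℝ} (hB : ∀ ω, |ζ ω| ≤ B) {m : ℝ}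
    (hm : ∀ᵐ ω ∂P, ζ ω ≤ m) : eB P ζ ≤ m :=
  csInf_le (eB_set_bddBelow P hB) hm

lemma ae_le_eB {ζ : Ω → ℝ} {B : ℝ} (hB : ∀ ω, |ζ ω| ≤ B) :
    ∀ᵐ ω ∂P, ζ ω ≤ eB P ζ := by
  have h : ∀ n : ℕ, ∀ᵐ ω ∂P, ζ ω ≤ eB P ζ + 1 / ((n : ℝ) + 1) := by
    intro n
    obtain ⟨m, hm, hlt⟩ := exists_lt_of_csInf_lt (eB_set_nonempty P hB)
      (lt_add_of_pos_right (eB P ζ) (by positivity : (0:ℝ) < 1 / ((n : ℝ) + 1)))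
    have hm' : ∀ᵐ ω ∂P, ζ ω ≤ m := hm
    exact hm'.mono fun ω h => h.trans hlt.le
  filter_upwards [ae_all_iff.mpr h] with ω hω
  by_contra hc
  push_neg at hc
  obtain ⟨n, hn⟩ := exists_nat_one_div_lt (sub_pos.mpr hc)
  have := hω n
  push_cast at hn this
  linarith

lemma meas_pos_of_lt_eB {ζ : Ω → ℝ} {B : ℝ} (hB : ∀ ω, |ζ ω| ≤ B) {u : ℝ}
    (hu : u < eB P ζ) : P {ω | u ≤ ζ ω} ≠ 0 := by
  intro h0
  have hae : ∀ᵐ ω ∂P, ζ ω ≤ u := by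
    have h1 : ∀ᵐ ω ∂P, ¬ (u ≤ ζ ω) := ae_iff.mpr (by simpa using h0)
    exact h1.mono fun ω h => (not_le.mp h).le
  exact absurd (eB_le P hB hae) (not_le.mpr hu)

lemma meas_one_iff {ζ : Ω → ℝ} (hζ : Measurable ζ) {B : ℝ} (hB : ∀ ω, |ζ ω| ≤ B)
    {u : ℝ} : P {ω | ζ ω ≤ u} = 1 ↔ eB P ζ ≤ u := by
  constructor
  · intro h1
    have h0 : P {ω | ζ ω ≤ u}ᶜ = 0 :=
      (prob_compl_eq_zero_iff (measurableSet_le hζ measurable_const)).mpr h1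
    refine eB_le P hB (ae_iff.mpr ?_)
    simpa [compl_setOf] using h0
  · intro hle
    rw [← prob_compl_eq_zero_iff (measurableSet_le hζ measurable_const)]
    have : ∀ᵐ ω ∂P, ζ ω ≤ u := (ae_le_eB P hB).mono fun ω h => h.trans hle
    simpa [compl_setOf] using ae_iff.mp this

lemma eB_zero : eB P (fun _ : Ω => (0 : ℝ)) = 0 := by
  apply le_antisymm
  · exact eB_le P (B := 0) (fun ω => by simp) (Filter.Eventually.of_forall fun ω => le_rfl)
  · refine le_csInf (eB_set_nonempty P (B := 0) fun ω => by simp) fun m hm => ?_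
    have hm' : ∀ᵐ ω ∂P, (0:ℝ) ≤ m := hm
    obtain ⟨ω, hω⟩ := hm'.exists
    exact hω


lemma eB_mono {ξ η : Ω → ℝ} {B : ℝ} (hξB : ∀ ω, |ξ ω| ≤ B) (hηB : ∀ ω, |η ω| ≤ B)
    (hle : ∀ ω, ξ ω ≤ η ω) : eB P ξ ≤ eB P η := by
  refine csInf_le_csInf (eB_set_bddBelow P hξB) (eB_set_nonempty P hηB) fun m hm => ?_
  have hm' : ∀ᵐ ω ∂P, η ω ≤ m := hm
  exact hm'.mono fun ω h => (hle ω).trans h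

lemma eB_add_const {ζ : Ω → ℝ} {B : ℝ} (hB : ∀ ω, |ζ ω| ≤ B) (c : ℝ) :
    eB P (fun ω => ζ ω + c) = eB P ζ + c := by
  have hB' : ∀ ω, |ζ ω + c| ≤ B + |c| := fun ω =>
    (abs_add_le _ _).trans (add_le_add (hB ω) le_rfl)
  apply le_antisymm
  · exact eB_le P hB' ((ae_le_eB P hB).mono fun ω h => by linarith)
  · have h2 : eB P ζ ≤ eB P (fun ω => ζ ω + c) - c :=
      eB_le P hB ((ae_le_eB P hB').mono fun ω h => by
        change ζ ω + c ≤ _ at h; linarith)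
    linarith

lemma eB_subadd {ξ η : Ω → ℝ} {B : ℝ} (hξB : ∀ ω, |ξ ω| ≤ B) (hηB : ∀ ω, |η ω| ≤ B) :
    eB P (fun ω => ξ ω + η ω) ≤ eB P ξ + eB P η := by
  have hB' : ∀ ω, |ξ ω + η ω| ≤ B + B := fun ω =>
    (abs_add_le _ _).trans (add_le_add (hξB ω) (hηB ω))
  refine eB_le P hB' ?_
  filter_upwards [ae_le_eB P hξB, ae_le_eB P hηB] with ω h1 h2
  exact add_le_add h1 h2

lemma eB_smul {ζ : Ω → ℝ} {B : ℝ} (hB : ∀ ω, |ζ ω| ≤ B) {l : ℝ} (hl : 0 < l) :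
    eB P (fun ω => l * ζ ω) = l * eB P ζ := by
  have hB' : ∀ ω, |l * ζ ω| ≤ l * B := fun ω => by
    rw [abs_mul, abs_of_pos hl]
    exact mul_le_mul_of_nonneg_left (hB ω) hl.le
  apply le_antisymm
  · exact eB_le P hB' ((ae_le_eB P hB).mono fun ω h =>
      mul_le_mul_of_nonneg_left h hl.le)
  · have h2 : eB P ζ ≤ (1 / l) * eB P (fun ω => l * ζ ω) := by
      refine eB_le P hB ((ae_le_eB P hB').mono fun ω h => ?_)
      change l * ζ ω ≤ _ at h
      have heq : ζ ω = (1 / l) * (l * ζ ω) := by field_simp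
      rw [heq]
      exact mul_le_mul_of_nonneg_left h (by positivity)
    calc l * eB P ζ ≤ l * ((1 / l) * eB P (fun ω => l * ζ ω)) :=
          mul_le_mul_of_nonneg_left h2 hl.le
      _ = eB P (fun ω => l * ζ ω) := by field_simp

/-! ### The special weighting functions -/

/-- Convex weighting function: `ε p` below `1`, value `p` at `1`. -/
def wmE (ε p : ℝ) : ℝ := if 1 ≤ p then p else ε * p

/-- Concave weighting function: `0` at `0`, `ε p + (1 - ε)` for `p > 0`. -/
def wpE (ε p : ℝ) : ℝ := if p ≤ 0 then ε * p else ε * p + (1 - ε)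

variable {ε : ℝ}

lemma wmE_zero : wmE ε 0 = 0 := by simp [wmE]

lemma wmE_one : wmE ε 1 = 1 := by simp [wmE]

lemma wpE_zero : wpE ε 0 = 0 := by simp [wpE]

lemma wmE_isWeight (hε : 0 < ε) (hε1 : ε < 1) : IsWeightFun (wmE ε) := by
  refine ⟨?_, ?_, wmE_zero, wmE_one⟩
  · intro p hp q hq hpq
    rcases le_or_gt 1 q with h1 | h1
    · have hq1 : q = 1 := le_antisymm hq.2 h1
      have hp1 : ¬ (1 ≤ p) := by rw [hq1] at hpq; linarith
      rw [wmE, if_neg hp1, wmE, if_pos h1, hq1]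
      nlinarith [hp.1, hp.2]
    · have hp1 : ¬ (1 ≤ p) := by linarith
      rw [wmE, if_neg hp1, wmE, if_neg (not_le.mpr h1)]
      nlinarith
  · intro p hp
    rcases le_or_gt 1 p with h1 | h1
    · rw [wmE, if_pos h1]; exact hp
    · rw [wmE, if_neg (not_le.mpr h1)]
      constructor
      · exact mul_nonneg hε.le hp.1
      · nlinarith [hp.1, hp.2]

lemma wpE_isWeight (hε : 0 < ε) (hε1 : ε < 1) : IsWeightFun (wpE ε) := by
  refine ⟨?_, ?_, wpE_zero, by simp [wpE]⟩
  · intro p hp q hq hpq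
    rcases le_or_gt p 0 with h0 | h0
    · have hp0 : p = 0 := le_antisymm h0 hp.1
      have hq0 : ¬ (q ≤ 0) := by rw [hp0] at hpq; linarith
      rw [wpE, if_pos h0, wpE, if_neg hq0, hp0]
      nlinarith [hq.1, hq.2]
    · have hq0 : ¬ (q ≤ 0) := by linarith
      rw [wpE, if_neg (not_le.mpr h0), wpE, if_neg hq0]
      nlinarith
  · intro p hp
    rcases le_or_gt p 0 with h0 | h0
    · have hp0 : p = 0 := le_antisymm h0 hp.1
      rw [wpE, if_pos h0, hp0]
      simp
    · rw [wpE, if_neg (not_le.mpr h0)]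
      constructor
      · nlinarith [hp.1, hp.2]
      · nlinarith [hp.1, hp.2]

lemma wmE_convex (hε : 0 < ε) (hε1 : ε < 1) : ConvexOn ℝ (Icc 0 1) (wmE ε) := by
  refine ⟨convex_Icc 0 1, ?_⟩
  intro x hx y hy a b ha hb hab
  simp only [smul_eq_mul]
  have hkey : ∀ p ∈ Icc (0:ℝ) 1, ε * p ≤ wmE ε p := by
    intro p hp
    rcases le_or_gt 1 p with h1 | h1
    · rw [wmE, if_pos h1]; nlinarith [hp.1, hp.2]
    · rw [wmE, if_neg (not_le.mpr h1)]
  rcases le_or_gt 1 (a * x + b * y) with h1 | h1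
  · have hc1 : a * x + b * y = 1 := by nlinarith [hx.2, hy.2]
    have hax : a * (1 - x) = 0 := by nlinarith [mul_nonneg ha (by linarith [hx.2] : (0:ℝ) ≤ 1 - x), mul_nonneg hb (by linarith [hy.2] : (0:ℝ) ≤ 1 - y)]
    have hby : b * (1 - y) = 0 := by nlinarith [mul_nonneg ha (by linarith [hx.2] : (0:ℝ) ≤ 1 - x), mul_nonneg hb (by linarith [hy.2] : (0:ℝ) ≤ 1 - y)]
    have h2 : a * wmE ε x = a * x := by
      rcases mul_eq_zero.mp hax with h | h
      · simp [h]
      · have hx1 : x = 1 := by linarith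
        rw [hx1, wmE_one]
    have h3 : b * wmE ε y = b * y := by
      rcases mul_eq_zero.mp hby with h | h
      · simp [h]
      · have hy1 : y = 1 := by linarith
        rw [hy1, wmE_one]
    rw [wmE, if_pos h1, h2, h3]
  · rw [wmE, if_neg (not_le.mpr h1)]
    calc ε * (a * x + b * y) = a * (ε * x) + b * (ε * y) := by ring
      _ ≤ a * wmE ε x + b * wmE ε y :=
        add_le_add (mul_le_mul_of_nonneg_left (hkey x hx) ha)
          (mul_le_mul_of_nonneg_left (hkey y hy) hb)

lemma wpE_concave (hε : 0 < ε) (hε1 : ε < 1) : ConcaveOn ℝ (Icc 0 1) (wpE ε) := by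
  refine ⟨convex_Icc 0 1, ?_⟩
  intro x hx y hy a b ha hb hab
  simp only [smul_eq_mul]
  have hkey : ∀ p ∈ Icc (0:ℝ) 1, wpE ε p ≤ ε * p + (1 - ε) := by
    intro p hp
    rcases le_or_gt p 0 with h0 | h0
    · rw [wpE, if_pos h0]; linarith
    · rw [wpE, if_neg (not_le.mpr h0)]
  rcases le_or_gt (a * x + b * y) 0 with h0 | h0
  · have hc0 : a * x + b * y = 0 := le_antisymm h0
      (add_nonneg (mul_nonneg ha hx.1) (mul_nonneg hb hy.1))
    have hax : a * x = 0 := by nlinarith [mul_nonneg ha hx.1, mul_nonneg hb hy.1]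
    have hby : b * y = 0 := by nlinarith [mul_nonneg ha hx.1, mul_nonneg hb hy.1]
    have h2 : a * wpE ε x = 0 := by
      rcases mul_eq_zero.mp hax with h | h
      · simp [h]
      · simp [h, wpE_zero]
    have h3 : b * wpE ε y = 0 := by
      rcases mul_eq_zero.mp hby with h | h
      · simp [h]
      · simp [h, wpE_zero]
    have hc : wpE ε (a * x + b * y) = 0 := by
      rw [wpE, if_pos h0, hc0, mul_zero]
    rw [hc, h2, h3]
    norm_num
  · have hc : wpE ε (a * x + b * y) = ε * (a * x + b * y) + (1 - ε) := by
      rw [wpE, if_neg (not_le.mpr h0)]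
    rw [hc]
    calc a * wpE ε x + b * wpE ε y
        ≤ a * (ε * x + (1 - ε)) + b * (ε * y + (1 - ε)) :=
          add_le_add (mul_le_mul_of_nonneg_left (hkey x hx) ha)
            (mul_le_mul_of_nonneg_left (hkey y hy) hb)
      _ = ε * (a * x + b * y) + (a + b) * (1 - ε) := by ring
      _ = ε * (a * x + b * y) + (1 - ε) := by rw [hab]; ring

/-! ### Integrability and layer cake -/

lemma aux_integrableOn {f : ℝ → ℝ} (hmono : Antitone f)
    (h01 : ∀ t, f t ∈ Icc (0:ℝ) 1) {K : ℝ} (hK : ∀ t, K < t → f t = 0) :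
    IntegrableOn f (Ioi 0) := by
  have hmeas : Measurable f := hmono.measurable
  refine Integrable.mono' (g := Set.indicator (Ioc (0:ℝ) K) fun _ => (1:ℝ))
    ?_ hmeas.aestronglyMeasurable ?_
  · rw [integrable_indicator_iff measurableSet_Ioc]
    refine (integrableOn_const_iff enorm_ne_top).mpr (Or.inr ?_)
    calc (volume.restrict (Ioi 0)) (Ioc 0 K) ≤ volume (Ioc 0 K) :=
          Measure.restrict_apply_le _ _
      _ < ⊤ := by rw [Real.volume_Ioc]; exact ENNReal.ofReal_lt_top
  · filter_upwards [ae_restrict_mem measurableSet_Ioi] with t ht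
    rcases le_or_gt t K with h | h
    · rw [Set.indicator_of_mem (show t ∈ Ioc (0:ℝ) K from ⟨ht, h⟩)]
      rw [Real.norm_eq_abs, abs_of_nonneg (h01 t).1]
      exact (h01 t).2
    · rw [hK t h]
      simp [Set.indicator_nonneg (fun _ _ => zero_le_one)]

lemma toReal_le_one {s : Set Ω} : (P s).toReal ≤ 1 := by
  have h := prob_le_one (μ := P) (s := s)
  calc (P s).toReal ≤ (1 : ENNReal).toReal := ENNReal.toReal_mono ENNReal.one_ne_top h
    _ = 1 := by simp

lemma tail_integral {ζ : Ω → ℝ} (hζ : Measurable ζ) {B : ℝ} (hB : ∀ ω, |ζ ω| ≤ B) :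
    (∫ t in Ioi (0:ℝ), (P {ω | t ≤ ζ ω}).toReal) = ∫ ω, max (ζ ω) 0 ∂P := by
  have hint : Integrable (fun ω => max (ζ ω) 0) P := by
    refine Integrable.mono' (integrable_const B) ((hζ.max measurable_const).aestronglyMeasurable)
      (Filter.Eventually.of_forall fun ω => ?_)
    rw [Real.norm_eq_abs, abs_of_nonneg (le_max_right _ _)]
    exact max_le ((le_abs_self _).trans (hB ω)) ((abs_nonneg (ζ ω)).trans (hB ω))
  have key := hint.integral_eq_integral_meas_le
    (Filter.Eventually.of_forall fun ω => le_max_right _ _)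
  rw [key]
  refine setIntegral_congr_fun measurableSet_Ioi fun t ht => ?_
  congr 1
  apply congrArg
  ext ω
  simp only [mem_setOf_eq, le_max_iff]
  exact ⟨fun h => Or.inl h, fun h => h.elim id fun h0 => absurd (lt_of_lt_of_le ht h0) (lt_irrefl 0)⟩

/-! ### Exact computation of the two CPT integrals for the special weights -/

lemma intA {ζ : Ω → ℝ} (hζ : Measurable ζ) {B : ℝ} (hB : ∀ ω, |ζ ω| ≤ B)
    (hε : 0 < ε) (hε1 : ε < 1) (x : ℝ) :
    (∫ t in Ioi (0:ℝ), wpE ε ((P {ω | t ≤ ζ ω - x}).toReal))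
      = ε * (∫ ω, max (ζ ω - x) 0 ∂P) + (1 - ε) * max (eB P ζ - x) 0 := by
  set M := eB P ζ with hM
  have hYB : ∀ ω, |ζ ω - x| ≤ B + |x| := fun ω => by
    have := abs_add_le (ζ ω) (-x)
    rw [abs_neg] at this
    have h2 := add_le_add_right (hB ω) |x|
    rw [sub_eq_add_neg]
    linarith
  have hganti : Antitone (fun t => (P {ω | t ≤ ζ ω - x}).toReal) := fun s t hst =>
    ENNReal.toReal_mono (measure_ne_top P _)
      (measure_mono fun ω hω => le_trans hst hω)
  have hg01 : ∀ t, (P {ω | t ≤ ζ ω - x}).toReal ∈ Icc (0:ℝ) 1 :=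
    fun t => ⟨ENNReal.toReal_nonneg, toReal_le_one P⟩
  have hgK : ∀ t, B + |x| < t → (P {ω | t ≤ ζ ω - x}).toReal = 0 := by
    intro t ht
    have hempty : {ω | t ≤ ζ ω - x} = ∅ := by
      ext ω
      simp only [mem_setOf_eq, mem_empty_iff_false, iff_false, not_le]
      have h1 := (abs_le.mp (hYB ω)).2
      linarith
    rw [hempty]
    simp
  have hgint : IntegrableOn (fun t => (P {ω | t ≤ ζ ω - x}).toReal) (Ioi 0) :=
    aux_integrableOn hganti hg01 hgK
  have h1 : ∀ᵐ t : ℝ, t ≠ M - x := by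
    refine ae_iff.mpr ?_
    have hsing : {t : ℝ | ¬ t ≠ M - x} = {M - x} := by ext t; simp [not_not]
    rw [hsing]
    exact Real.volume_singleton
  have hcong : ∀ᵐ t ∂(volume.restrict (Ioi (0:ℝ))),
      wpE ε ((P {ω | t ≤ ζ ω - x}).toReal)
        = ε * (P {ω | t ≤ ζ ω - x}).toReal
          + Set.indicator (Ioo 0 (M - x)) (fun _ => (1 - ε)) t := by
    filter_upwards [ae_restrict_mem measurableSet_Ioi, ae_restrict_of_ae h1] with t ht hne
    rcases lt_or_gt_of_ne hne with hlt | hgt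
    · have hpos : 0 < (P {ω | t ≤ ζ ω - x}).toReal := by
        refine ENNReal.toReal_pos ?_ (measure_ne_top P _)
        have hseteq : {ω | x + t ≤ ζ ω} = {ω | t ≤ ζ ω - x} := by
          ext ω; simp only [mem_setOf_eq]; constructor <;> intro <;> linarith
        rw [← hseteq]
        exact meas_pos_of_lt_eB P hB (by linarith)
      rw [wpE, if_neg (not_le.mpr hpos),
        Set.indicator_of_mem (show t ∈ Ioo (0:ℝ) (M - x) from ⟨ht, hlt⟩)]
    · have hzero : P {ω | t ≤ ζ ω - x} = 0 := by
        refine measure_mono_null ?_ (ae_iff.mp (ae_le_eB P hB))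
        intro ω hω
        simp only [mem_setOf_eq] at hω ⊢
        exact not_le.mpr (by linarith)
      rw [hzero]
      simp only [ENNReal.toReal_zero, mul_zero, wpE_zero]
      rw [Set.indicator_of_notMem (fun hmem => absurd hmem.2 (not_lt.mpr hgt.le))]
      norm_num
  rw [integral_congr_ae hcong]
  have hint1 : Integrable (fun t => ε * (P {ω | t ≤ ζ ω - x}).toReal)
      (volume.restrict (Ioi (0:ℝ))) := hgint.const_mul ε
  have hint2 : Integrable (Set.indicator (Ioo (0:ℝ) (M - x)) (fun _ => (1 - ε)))
      (volume.restrict (Ioi (0:ℝ))) := by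
    rw [integrable_indicator_iff measurableSet_Ioo]
    refine (integrableOn_const_iff enorm_ne_top).mpr (Or.inr ?_)
    calc (volume.restrict (Ioi (0:ℝ))) (Ioo 0 (M - x)) ≤ volume (Ioo 0 (M - x)) :=
          Measure.restrict_apply_le _ _
      _ < ⊤ := by rw [Real.volume_Ioo]; exact ENNReal.ofReal_lt_top
  rw [integral_add hint1 hint2, integral_const_mul]
  congr 1
  · congr 1
    exact tail_integral P (hζ.sub measurable_const) hYB
  · rw [integral_indicator_const _ measurableSet_Ioo, measureReal_def,
      Measure.restrict_apply measurableSet_Ioo,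
      inter_eq_self_of_subset_left Ioo_subset_Ioi_self, Real.volume_Ioo,
      smul_eq_mul, ENNReal.toReal_ofReal']
    rw [sub_zero, mul_comm]

lemma intB {ζ : Ω → ℝ} (hζ : Measurable ζ) {B : ℝ} (hB : ∀ ω, |ζ ω| ≤ B)
    (hε : 0 < ε) (hε1 : ε < 1) (x : ℝ) :
    (∫ t in Ioi (0:ℝ), wmE ε ((P {ω | ζ ω - x ≤ -t}).toReal))
      = ε * (∫ ω, max (x - ζ ω) 0 ∂P) + (1 - ε) * max (x - eB P ζ) 0 := by
  set M := eB P ζ with hM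
  have hYB : ∀ ω, |ζ ω - x| ≤ B + |x| := fun ω => by
    have := abs_add_le (ζ ω) (-x)
    rw [abs_neg] at this
    have h2 := add_le_add_right (hB ω) |x|
    rw [sub_eq_add_neg]
    linarith
  have hhanti : Antitone (fun t => (P {ω | ζ ω - x ≤ -t}).toReal) := fun s t hst =>
    ENNReal.toReal_mono (measure_ne_top P _)
      (measure_mono fun ω hω => le_trans hω (neg_le_neg hst))
  have hh01 : ∀ t, (P {ω | ζ ω - x ≤ -t}).toReal ∈ Icc (0:ℝ) 1 :=
    fun t => ⟨ENNReal.toReal_nonneg, toReal_le_one P⟩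
  have hhK : ∀ t, B + |x| < t → (P {ω | ζ ω - x ≤ -t}).toReal = 0 := by
    intro t ht
    have hempty : {ω | ζ ω - x ≤ -t} = ∅ := by
      ext ω
      simp only [mem_setOf_eq, mem_empty_iff_false, iff_false, not_le]
      have h1 := (abs_le.mp (hYB ω)).1
      linarith
    rw [hempty]
    simp
  have hhint : IntegrableOn (fun t => (P {ω | ζ ω - x ≤ -t}).toReal) (Ioi 0) :=
    aux_integrableOn hhanti hh01 hhK
  have hseteq : ∀ t : ℝ, {ω | ζ ω - x ≤ -t} = {ω | ζ ω ≤ x - t} := by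
    intro t; ext ω; simp only [mem_setOf_eq]; constructor <;> intro <;> linarith
  have hcong : ∀ t ∈ Ioi (0:ℝ),
      wmE ε ((P {ω | ζ ω - x ≤ -t}).toReal)
        = ε * (P {ω | ζ ω - x ≤ -t}).toReal
          + Set.indicator (Ioc 0 (x - M)) (fun _ => (1 - ε)) t := by
    intro t ht
    have hiff : 1 ≤ (P {ω | ζ ω - x ≤ -t}).toReal ↔ t ≤ x - M := by
      constructor
      · intro hle
        have hone : P {ω | ζ ω ≤ x - t} = 1 := by
          rw [← hseteq t]
          refine le_antisymm prob_le_one ?_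
          calc (1 : ENNReal) = ENNReal.ofReal 1 := by simp
            _ ≤ ENNReal.ofReal ((P {ω | ζ ω - x ≤ -t}).toReal) :=
                ENNReal.ofReal_le_ofReal hle
            _ = P {ω | ζ ω - x ≤ -t} := ENNReal.ofReal_toReal (measure_ne_top P _)
        have := (meas_one_iff P hζ hB).mp hone
        linarith
      · intro hle
        have hone : P {ω | ζ ω ≤ x - t} = 1 :=
          (meas_one_iff P hζ hB).mpr (by linarith)
        rw [hseteq t, hone]
        simp
    rcases le_or_gt 1 ((P {ω | ζ ω - x ≤ -t}).toReal) with h1 | h1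
    · have hht : (P {ω | ζ ω - x ≤ -t}).toReal = 1 := le_antisymm (hh01 t).2 h1
      rw [wmE, if_pos h1,
        Set.indicator_of_mem (show t ∈ Ioc (0:ℝ) (x - M) from ⟨ht, hiff.mp h1⟩), hht]
      ring
    · rw [wmE, if_neg (not_le.mpr h1),
        Set.indicator_of_notMem (fun hmem : t ∈ Ioc (0:ℝ) (x - M) =>
          absurd (hiff.mpr hmem.2) (not_le.mpr h1))]
      ring
  rw [setIntegral_congr_fun measurableSet_Ioi hcong]
  have hint1 : Integrable (fun t => ε * (P {ω | ζ ω - x ≤ -t}).toReal)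
      (volume.restrict (Ioi (0:ℝ))) := hhint.const_mul ε
  have hint2 : Integrable (Set.indicator (Ioc (0:ℝ) (x - M)) (fun _ => (1 - ε)))
      (volume.restrict (Ioi (0:ℝ))) := by
    rw [integrable_indicator_iff measurableSet_Ioc]
    refine (integrableOn_const_iff enorm_ne_top).mpr (Or.inr ?_)
    calc (volume.restrict (Ioi (0:ℝ))) (Ioc 0 (x - M)) ≤ volume (Ioc 0 (x - M)) :=
          Measure.restrict_apply_le _ _
      _ < ⊤ := by rw [Real.volume_Ioc]; exact ENNReal.ofReal_lt_top
  rw [integral_add hint1 hint2, integral_const_mul]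
  congr 1
  · congr 1
    have htail := tail_integral P (ζ := fun ω => x - ζ ω)
      (measurable_const.sub hζ) (B := |x| + B)
      (fun ω => by
        show |x - ζ ω| ≤ |x| + B
        have := abs_add_le x (-ζ ω)
        rw [abs_neg] at this
        have h2 := hB ω
        rw [sub_eq_add_neg]
        linarith)
    rw [← htail]
    refine setIntegral_congr_fun measurableSet_Ioi fun t ht => ?_
    congr 2
    ext ω
    simp only [mem_setOf_eq]
    constructor <;> intro <;> linarith
  · rw [integral_indicator_const _ measurableSet_Ioc, measureReal_def,
      Measure.restrict_apply measurableSet_Ioc,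
      inter_eq_self_of_subset_left Ioc_subset_Ioi_self, Real.volume_Ioc,
      smul_eq_mul, ENNReal.toReal_ofReal']
    rw [sub_zero, mul_comm]

lemma integrable_of_bdd {ζ : Ω → ℝ} (hζ : Measurable ζ) {B : ℝ}
    (hB : ∀ ω, |ζ ω| ≤ B) : Integrable ζ P :=
  Integrable.mono' (integrable_const B) hζ.aestronglyMeasurable
    (Filter.Eventually.of_forall fun ω => by rw [Real.norm_eq_abs]; exact hB ω)

lemma max_sub_max (a : ℝ) : max a 0 - max (-a) 0 = a := by
  rcases le_total a 0 with h | h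
  · rw [max_eq_right h, max_eq_left (by linarith)]; ring
  · rw [max_eq_left h, max_eq_right (by linarith)]; ring

lemma cpt_formula {ζ : Ω → ℝ} (hζ : Measurable ζ) {B : ℝ} (hB : ∀ ω, |ζ ω| ≤ B)
    (hε : 0 < ε) (hε1 : ε < 1) (x : ℝ) :
    cptE P (fun y => y) (wmE ε) (wpE ε) (fun ω => ζ ω - x)
      = (ε * (∫ ω, ζ ω ∂P) + (1 - ε) * eB P ζ) - x := by
  have hunfold : cptE P (fun y => y) (wmE ε) (wpE ε) (fun ω => ζ ω - x)
      = (∫ t in Ioi (0:ℝ), wpE ε ((P {ω | t ≤ ζ ω - x}).toReal))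
        - ∫ t in Ioi (0:ℝ), wmE ε ((P {ω | ζ ω - x ≤ -t}).toReal) := rfl
  rw [hunfold, intA P hζ hB hε hε1 x, intB P hζ hB hε hε1 x]
  have hYB : ∀ ω, |ζ ω - x| ≤ B + |x| := fun ω => by
    have := abs_add_le (ζ ω) (-x)
    rw [abs_neg] at this
    have h2 := hB ω
    rw [sub_eq_add_neg]
    linarith
  have hint1 : Integrable (fun ω => max (ζ ω - x) 0) P := by
    refine Integrable.mono' (integrable_const (B + |x|))
      (((hζ.sub measurable_const).max measurable_const).aestronglyMeasurable)
      (Filter.Eventually.of_forall fun ω => ?_)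
    rw [Real.norm_eq_abs, abs_of_nonneg (le_max_right _ _)]
    exact max_le ((le_abs_self _).trans (hYB ω)) ((abs_nonneg _).trans (hYB ω))
  have hint2 : Integrable (fun ω => max (x - ζ ω) 0) P := by
    refine Integrable.mono' (integrable_const (B + |x|))
      (((measurable_const.sub hζ).max measurable_const).aestronglyMeasurable)
      (Filter.Eventually.of_forall fun ω => ?_)
    rw [Real.norm_eq_abs, abs_of_nonneg (le_max_right _ _)]
    refine max_le (le_trans ?_ (hYB ω)) ((abs_nonneg _).trans (hYB ω))
    rw [← abs_neg, neg_sub]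
    exact le_abs_self _
  have hsub : (∫ ω, max (ζ ω - x) 0 ∂P) - ∫ ω, max (x - ζ ω) 0 ∂P
      = (∫ ω, ζ ω ∂P) - x := by
    rw [← integral_sub hint1 hint2]
    have hfun : (fun ω => max (ζ ω - x) 0 - max (x - ζ ω) 0) = fun ω => ζ ω - x := by
      funext ω
      have := max_sub_max (ζ ω - x)
      rw [neg_sub] at this
      exact this
    rw [hfun, integral_sub (integrable_of_bdd P hζ hB) (integrable_const x),
      integral_const]
    simp
  have hmax : max (eB P ζ - x) 0 - max (x - eB P ζ) 0 = eB P ζ - x := by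
    have := max_sub_max (eB P ζ - x)
    rw [neg_sub] at this
    exact this
  nlinarith [hsub, hmax]

lemma sInf_image_Ici (r : ℝ) :
    sInf ((fun x : ℝ => (x : EReal)) '' Ici r) = (r : EReal) := by
  apply le_antisymm
  · exact sInf_le ⟨r, self_mem_Ici, rfl⟩
  · refine le_sInf ?_
    rintro b ⟨y, hy, rfl⟩
    exact EReal.coe_le_coe_iff.mpr hy

lemma gsr_formula {ζ : Ω → ℝ} (hζ : Measurable ζ) {B : ℝ} (hB : ∀ ω, |ζ ω| ≤ B)
    (hε : 0 < ε) (hε1 : ε < 1) :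
    gsr P (fun y => y) (wmE ε) (wpE ε) ζ
      = ((ε * (∫ ω, ζ ω ∂P) + (1 - ε) * eB P ζ : ℝ) : EReal) := by
  have hset : {x : ℝ | cptE P (fun y => y) (wmE ε) (wpE ε) (fun ω => ζ ω - x) ≤ 0}
      = Ici (ε * (∫ ω, ζ ω ∂P) + (1 - ε) * eB P ζ) := by
    ext x
    rw [mem_setOf_eq, cpt_formula P hζ hB hε hε1 x, mem_Ici]
    constructor <;> intro <;> linarith
  rw [gsr, hset, sInf_image_Ici]

lemma cptE_nonpos {v wm wp : ℝ → ℝ} (hv : StrictMono v) (hv0 : v 0 = 0)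
    (hwm : MapsTo wm (Icc 0 1) (Icc 0 1)) (hwp0 : wp 0 = 0)
    {ζ : Ω → ℝ} {x : ℝ} (hx : ∀ᵐ ω ∂P, ζ ω ≤ x) :
    cptE P v wm wp (fun ω => ζ ω - x) ≤ 0 := by
  have h1 : (∫ t in Ioi (0:ℝ), wp ((P {ω | t ≤ v ((fun ω => ζ ω - x) ω)}).toReal)) = 0 := by
    rw [setIntegral_congr_fun (g := fun _ => (0:ℝ)) measurableSet_Ioi ?_]
    · exact integral_zero _ _
    · intro t ht
      have hnull : P {ω | t ≤ v (ζ ω - x)} = 0 := by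
        refine measure_mono_null ?_ (ae_iff.mp hx)
        intro ω hω
        simp only [mem_setOf_eq] at hω ⊢
        intro hle
        have h2 : v (ζ ω - x) ≤ v 0 := hv.monotone (by linarith)
        rw [hv0] at h2
        have := lt_of_lt_of_le ht (le_trans hω h2)
        exact absurd this (lt_irrefl 0)
      show wp ((P {ω | t ≤ v (ζ ω - x)}).toReal) = 0
      rw [hnull]
      simpa using hwp0
  have h2 : 0 ≤ ∫ t in Ioi (0:ℝ), wm ((P {ω | v ((fun ω => ζ ω - x) ω) ≤ -t}).toReal) :=
    integral_nonneg fun t => (hwm ⟨ENNReal.toReal_nonneg, toReal_le_one P⟩).1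
  have hunfold : cptE P v wm wp (fun ω => ζ ω - x)
      = (∫ t in Ioi (0:ℝ), wp ((P {ω | t ≤ v ((fun ω => ζ ω - x) ω)}).toReal))
        - ∫ t in Ioi (0:ℝ), wm ((P {ω | v ((fun ω => ζ ω - x) ω) ≤ -t}).toReal) := rfl
  rw [hunfold, h1]
  linarith

lemma gsr_le_eB {v wm wp : ℝ → ℝ} (hv : StrictMono v) (hv0 : v 0 = 0)
    (hwm : MapsTo wm (Icc 0 1) (Icc 0 1)) (hwp0 : wp 0 = 0)
    {ζ : Ω → ℝ} {B : ℝ} (hB : ∀ ω, |ζ ω| ≤ B) :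
    gsr P v wm wp ζ ≤ ((eB P ζ : ℝ) : EReal) :=
  sInf_le ⟨eB P ζ, cptE_nonpos P hv hv0 hwm hwp0 (ae_le_eB P hB), rfl⟩

lemma gsr_coherent (hε : 0 < ε) (hε1 : ε < 1) :
    IsCoherentRM (fun ζ : Ω → ℝ => gsr P (fun y => y) (wmE ε) (wpE ε) ζ) := by
  refine ⟨?_, ?_, ?_, ?_⟩
  · -- monotone
    rintro ξ η ⟨hξm, Bξ, hξB⟩ ⟨hηm, Bη, hηB⟩ hle
    dsimp only
    have hξB' : ∀ ω, |ξ ω| ≤ max Bξ Bη := fun ω => (hξB ω).trans (le_max_left _ _)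
    have hηB' : ∀ ω, |η ω| ≤ max Bξ Bη := fun ω => (hηB ω).trans (le_max_right _ _)
    rw [gsr_formula P hξm hξB' hε hε1, gsr_formula P hηm hηB' hε hε1]
    refine EReal.coe_le_coe_iff.mpr ?_
    have h1 : (∫ ω, ξ ω ∂P) ≤ ∫ ω, η ω ∂P :=
      integral_mono (integrable_of_bdd P hξm hξB') (integrable_of_bdd P hηm hηB') hle
    have h2 : eB P ξ ≤ eB P η := eB_mono P hξB' hηB' hle
    nlinarith
  · -- translation invariance
    rintro ξ ⟨hξm, Bξ, hξB⟩ c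
    dsimp only
    have hcB : ∀ ω, |ξ ω + c| ≤ Bξ + |c| := fun ω =>
      (abs_add_le _ _).trans (add_le_add (hξB ω) le_rfl)
    rw [gsr_formula P (hξm.add_const c) hcB hε hε1, gsr_formula P hξm hξB hε hε1,
      ← EReal.coe_add]
    congr 1
    rw [integral_add (integrable_of_bdd P hξm hξB) (integrable_const c),
      integral_const, eB_add_const P hξB c]
    simp only [measure_univ, probReal_univ, ENNReal.toReal_one, smul_eq_mul, one_mul]
    ring
  · -- subadditivity
    rintro ξ η ⟨hξm, Bξ, hξB⟩ ⟨hηm, Bη, hηB⟩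
    dsimp only
    have hξB' : ∀ ω, |ξ ω| ≤ max Bξ Bη := fun ω => (hξB ω).trans (le_max_left _ _)
    have hηB' : ∀ ω, |η ω| ≤ max Bξ Bη := fun ω => (hηB ω).trans (le_max_right _ _)
    have hsB : ∀ ω, |ξ ω + η ω| ≤ Bξ + Bη := fun ω =>
      (abs_add_le _ _).trans (add_le_add (hξB ω) (hηB ω))
    rw [gsr_formula P (ζ := fun ω => ξ ω + η ω) (hξm.add hηm) hsB hε hε1, gsr_formula P hξm hξB hε hε1,
      gsr_formula P hηm hηB hε hε1, ← EReal.coe_add]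
    refine EReal.coe_le_coe_iff.mpr ?_
    have h1 : (∫ ω, ξ ω + η ω ∂P) = (∫ ω, ξ ω ∂P) + ∫ ω, η ω ∂P :=
      integral_add (integrable_of_bdd P hξm hξB) (integrable_of_bdd P hηm hηB)
    have h2 : eB P (fun ω => ξ ω + η ω) ≤ eB P ξ + eB P η :=
      eB_subadd P hξB' hηB'
    nlinarith
  · -- positive homogeneity
    rintro ξ ⟨hξm, Bξ, hξB⟩ l hl
    dsimp only
    rcases eq_or_lt_of_le hl with hl0 | hl0
    · have hzero : (fun ω => l * ξ ω) = fun _ : Ω => (0:ℝ) := by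
        funext ω; rw [← hl0]; ring
      rw [hzero, gsr_formula P measurable_const (B := 0) (fun ω => by simp) hε hε1,
        gsr_formula P hξm hξB hε hε1, ← hl0]
      rw [eB_zero P]
      simp
    · have hlB : ∀ ω, |l * ξ ω| ≤ l * Bξ := fun ω => by
        rw [abs_mul, abs_of_pos hl0]
        exact mul_le_mul_of_nonneg_left (hξB ω) hl0.le
      rw [gsr_formula P (ζ := fun ω => l * ξ ω) (measurable_const.mul hξm) hlB hε hε1,
        gsr_formula P hξm hξB hε hε1, ← EReal.coe_mul]
      congr 1
      rw [integral_const_mul, eB_smul P hξB hl0]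
      ring

lemma cohValue_strictMono {v : ℝ → ℝ} (hv : v ∈ cohValueFuns) :
    StrictMono v ∧ v 0 = 0 := by
  obtain ⟨a₁, a₂, ha₁, ha₂, hpos, hneg⟩ := hv
  have hv0 : v 0 = 0 := by rw [hpos 0 le_rfl, mul_zero]
  refine ⟨fun p q hpq => ?_, hv0⟩
  rcases le_or_gt 0 p with hp | hp
  · rw [hpos p hp, hpos q (hp.trans hpq.le)]
    exact mul_lt_mul_of_pos_left hpq ha₁
  · rcases lt_or_ge q 0 with hq | hq
    · rw [hneg p hp, hneg q hq]
      exact mul_lt_mul_of_pos_left hpq ha₂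
    · rw [hneg p hp, hpos q hq]
      have h1 : a₂ * p < 0 := mul_neg_of_pos_of_neg ha₂ hp
      have h2 : 0 ≤ a₁ * q := mul_nonneg ha₁.le hq
      linarith

end PRGSRAux

open PRGSRAux Filter in
/-- the robust shortfall risk over
`𝒱_coh × 𝒲₁ × 𝒲₂` (with `𝒲₁` the convex and `𝒲₂` the concave weighting
functions) equals the supremum of the GSR-CPT over all tuples inducing a
coherent risk measure. -/
theorem prgsr_coherent {Ω : Type*} [MeasurableSpace Ω] (P : Measure Ω)
    [IsProbabilityMeasure P]
    (ξ : Ω → ℝ) (hξ : IsBddRV ξ) :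
    sInf ((fun x : ℝ => (x : EReal)) ''
        {x : ℝ | ∀ vw : (ℝ → ℝ) × (ℝ → ℝ) × (ℝ → ℝ),
          vw.1 ∈ cohValueFuns →
          (IsWeightFun vw.2.1 ∧ ConvexOn ℝ (Icc 0 1) vw.2.1) →
          (IsWeightFun vw.2.2 ∧ ConcaveOn ℝ (Icc 0 1) vw.2.2) →
          cptE P vw.1 vw.2.1 vw.2.2 (fun ω => ξ ω - x) ≤ 0})
      = ⨆ vw ∈ {vw : (ℝ → ℝ) × (ℝ → ℝ) × (ℝ → ℝ) |
            IsValueFun vw.1 ∧ IsWeightFun vw.2.1 ∧ IsWeightFun vw.2.2 ∧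
            IsCoherentRM (fun ζ : Ω → ℝ => gsr P vw.1 vw.2.1 vw.2.2 ζ)},
          gsr P vw.1 vw.2.1 vw.2.2 ξ := by
  classical
  obtain ⟨hmeas, B, hB⟩ := hξ
  set M := eB P ξ with hM
  set E := ∫ ω, ξ ω ∂P with hE
  have hεn : ∀ n : ℕ, 0 < 1/((n:ℝ)+2) ∧ 1/((n:ℝ)+2) < 1 := fun n =>
    ⟨by positivity, by
      rw [div_lt_one (by positivity)]
      have : (0:ℝ) ≤ (n:ℝ) := Nat.cast_nonneg n
      linarith⟩
  have hvId : (fun y : ℝ => y) ∈ cohValueFuns :=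
    ⟨1, 1, one_pos, one_pos, fun x _ => (one_mul x).symm, fun x _ => (one_mul x).symm⟩
  -- the real sequence tending to M
  have htd : Tendsto (fun n : ℕ => (1/((n:ℝ)+2)) * E + (1 - 1/((n:ℝ)+2)) * M)
      atTop (nhds (0 * E + (1 - 0) * M)) := by
    have h0 : Tendsto (fun n : ℕ => 1/((n:ℝ)+2)) atTop (nhds 0) := by
      have h2 : Tendsto (fun n : ℕ => ((n:ℝ)+2)) atTop atTop :=
        tendsto_atTop_add_const_right _ 2 tendsto_natCast_atTop_atTop
      simpa [one_div, Pi.inv_def] using h2.inv_tendsto_atTop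
    exact (h0.mul_const E).add ((tendsto_const_nhds.sub h0).mul_const M)
  -- the left-hand side
  have hL : {x : ℝ | ∀ vw : (ℝ → ℝ) × (ℝ → ℝ) × (ℝ → ℝ),
          vw.1 ∈ cohValueFuns →
          (IsWeightFun vw.2.1 ∧ ConvexOn ℝ (Icc 0 1) vw.2.1) →
          (IsWeightFun vw.2.2 ∧ ConcaveOn ℝ (Icc 0 1) vw.2.2) →
          cptE P vw.1 vw.2.1 vw.2.2 (fun ω => ξ ω - x) ≤ 0} = Ici M := by
    ext x
    simp only [Set.mem_setOf_eq, Set.mem_Ici]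
    constructor
    · intro hx
      have key : ∀ n : ℕ, (1/((n:ℝ)+2)) * E + (1 - 1/((n:ℝ)+2)) * M ≤ x := by
        intro n
        obtain ⟨hp, hp1⟩ := hεn n
        have h := hx ((fun y : ℝ => y), wmE (1/((n:ℝ)+2)), wpE (1/((n:ℝ)+2))) hvId
          ⟨wmE_isWeight hp hp1, wmE_convex hp hp1⟩
          ⟨wpE_isWeight hp hp1, wpE_concave hp hp1⟩
        dsimp only at h
        rw [cpt_formula P hmeas hB hp hp1 x] at h
        linarith
      have := le_of_tendsto htd (Filter.Eventually.of_forall key)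
      linarith
    · intro hx vw hv hwm hwp
      obtain ⟨hsm, hv0⟩ := cohValue_strictMono hv
      exact cptE_nonpos P hsm hv0 hwm.1.2.1 hwp.1.2.2.1
        ((ae_le_eB P hB).mono fun ω h => h.trans hx)
  rw [hL, sInf_image_Ici M]
  -- the right-hand side
  apply le_antisymm
  · -- (M : EReal) ≤ ⨆ ...
    have hle : ∀ n : ℕ,
        (((1/((n:ℝ)+2)) * E + (1 - 1/((n:ℝ)+2)) * M : ℝ) : EReal)
          ≤ ⨆ vw ∈ {vw : (ℝ → ℝ) × (ℝ → ℝ) × (ℝ → ℝ) |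
            IsValueFun vw.1 ∧ IsWeightFun vw.2.1 ∧ IsWeightFun vw.2.2 ∧
            IsCoherentRM (fun ζ : Ω → ℝ => gsr P vw.1 vw.2.1 vw.2.2 ζ)},
          gsr P vw.1 vw.2.1 vw.2.2 ξ := by
      intro n
      obtain ⟨hp, hp1⟩ := hεn n
      have hmem : (((fun y : ℝ => y), wmE (1/((n:ℝ)+2)), wpE (1/((n:ℝ)+2)))
            : (ℝ → ℝ) × (ℝ → ℝ) × (ℝ → ℝ))
          ∈ {vw : (ℝ → ℝ) × (ℝ → ℝ) × (ℝ → ℝ) |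
            IsValueFun vw.1 ∧ IsWeightFun vw.2.1 ∧ IsWeightFun vw.2.2 ∧
            IsCoherentRM (fun ζ : Ω → ℝ => gsr P vw.1 vw.2.1 vw.2.2 ζ)} :=
        ⟨⟨fun a b h => h, rfl⟩, wmE_isWeight hp hp1, wpE_isWeight hp hp1,
          gsr_coherent P hp hp1⟩
      refine le_trans (le_of_eq ?_)
        (le_iSup₂ (f := fun (vw : (ℝ → ℝ) × (ℝ → ℝ) × (ℝ → ℝ))
          (_ : vw ∈ {vw : (ℝ → ℝ) × (ℝ → ℝ) × (ℝ → ℝ) |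
            IsValueFun vw.1 ∧ IsWeightFun vw.2.1 ∧ IsWeightFun vw.2.2 ∧
            IsCoherentRM (fun ζ : Ω → ℝ => gsr P vw.1 vw.2.1 vw.2.2 ζ)}) =>
            gsr P vw.1 vw.2.1 vw.2.2 ξ) _ hmem)
      exact (gsr_formula P hmeas hB hp hp1).symm
    have hcoe : Tendsto (fun n : ℕ =>
        (((1/((n:ℝ)+2)) * E + (1 - 1/((n:ℝ)+2)) * M : ℝ) : EReal))
        atTop (nhds ((M : ℝ) : EReal)) := by
      refine EReal.tendsto_coe.mpr ?_
      simpa using htd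
    exact le_of_tendsto hcoe (Filter.Eventually.of_forall hle)
  · refine iSup₂_le fun vw hvw => ?_
    obtain ⟨⟨hsm, hv0⟩, hwm, hwp, _⟩ := hvw
    exact gsr_le_eB P hsm hv0 hwm.2.1 hwp.2.2.1 hB
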